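/- Let Λ ⊂ ℂ be a lattice, let p be an integer greater than 1, and let f be a Λ-elliptic meromorphic function, not identically zero. If there is a constant c ∈ ℂ such that f(pz) = c·f(z) for all z ∈ ℂ, then f is constant. -/

import Mathlib

open Filter Function

/-- `Λ` is a lattice in `ℂ`: the set `ℤω₁ + ℤω₂` for two complex numbers `ω₁, ω₂`
which are linearly independent over `ℝ`. -/
def IsComplexLattice (Λ : Set ℂ) : Prop :=
  ∃ ω₁ ω₂ : ℂ, LinearIndependent ℝ ![ω₁, ω₂] ∧
    Λ = {z : ℂ | ∃ m n : ℤ, z = (m : ℂ) * ω₁ + (n : ℂ) * ω₂}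

/-- `g` is a `Λ`-elliptic function: a meromorphic function on `ℂ` satisfying
`g(z + λ) = g(z)` for all `z ∈ ℂ` and `λ ∈ Λ`. -/
def IsElliptic (Λ : Set ℂ) (g : ℂ → ℂ) : Prop :=
  (∀ z : ℂ, MeromorphicAt g z) ∧ ∀ z : ℂ, ∀ l ∈ Λ, g (z + l) = g z

-- density of p-power rationals
lemma dense_ppow (p : ℤ) (hp : 1 < p) :
    Dense {x : ℝ | ∃ (m : ℤ) (k : ℕ), x = (m : ℝ) / (p : ℝ) ^ k} := by
  have hp1 : (1 : ℝ) < (p : ℝ) := by exact_mod_cast hp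
  rw [Metric.dense_iff]
  intro x r hr
  obtain ⟨k, hk⟩ := pow_unbounded_of_one_lt (1 / r) hp1
  have hpk : (0 : ℝ) < (p : ℝ) ^ k := pow_pos (by linarith) k
  refine ⟨(⌊x * (p : ℝ) ^ k⌋ : ℝ) / (p : ℝ) ^ k, ?_, ⟨_, k, rfl⟩⟩
  rw [Metric.mem_ball, Real.dist_eq]
  have h1 : x - (⌊x * (p : ℝ) ^ k⌋ : ℝ) / (p : ℝ) ^ k < 1 / (p : ℝ) ^ k := by
    rw [sub_lt_iff_lt_add, ← add_div, lt_div_iff₀ hpk]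
    have := Int.lt_floor_add_one (x * (p : ℝ) ^ k)
    linarith
  have h2 : 0 ≤ x - (⌊x * (p : ℝ) ^ k⌋ : ℝ) / (p : ℝ) ^ k := by
    rw [sub_nonneg, div_le_iff₀ hpk]
    exact Int.floor_le _
  have h3 : 1 / (p : ℝ) ^ k < r := by
    rw [div_lt_iff₀ hpk]
    rw [div_lt_iff₀ hr] at hk
    linarith [mul_comm r ((p:ℝ)^k)]
  rw [abs_sub_comm, abs_of_nonneg h2]
  linarith


/-- **Rigidity.** A nonzero `Λ`-elliptic function `f` with `f(pz) = c·f(z)` for some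
constant `c` and an integer `p > 1` is constant. -/
theorem elliptic_eigenfunction_constant
    (Λ : Set ℂ) (hΛ : IsComplexLattice Λ)
    (p : ℤ) (hp : 1 < p)
    (f : ℂ → ℂ) (hf : IsElliptic Λ f) (hf0 : ∃ z : ℂ, f z ≠ 0)
    (c : ℂ) (hc : ∀ z : ℂ, f ((p : ℂ) * z) = c * f z) :
    ∃ k : ℂ, ∀ z : ℂ, f z = k := by
  obtain ⟨ω₁, ω₂, hli, hΛeq⟩ := hΛ
  obtain ⟨hmero, hper⟩ := hf
  have hp0 : (p : ℂ) ≠ 0 := by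
    exact_mod_cast (by omega : p ≠ 0)
  -- c ≠ 0
  have hc0 : c ≠ 0 := by
    intro h
    obtain ⟨z, hz⟩ := hf0
    apply hz
    have h1 := hc (z / p)
    rw [h, zero_mul, mul_div_cancel₀ _ hp0] at h1
    exact h1
  -- the set of periods
  set P : Set ℂ := {t | ∀ z, f (z + t) = f z} with hPdef
  have hPadd : ∀ s ∈ P, ∀ t ∈ P, s + t ∈ P := by
    intro s hs t ht z
    rw [← add_assoc, ht, hs]
  have hPdiv : ∀ t ∈ P, t / p ∈ P := by
    intro t ht z
    have h1 := hc (z + t / p)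
    rw [mul_add, mul_div_cancel₀ _ hp0, ht, hc] at h1
    exact (mul_left_cancel₀ hc0 h1).symm
  have hPpow : ∀ (k : ℕ) (l : ℂ), l ∈ Λ → l / (p : ℂ) ^ k ∈ P := by
    intro k
    induction k with
    | zero => intro l hl z; simpa using hper z l hl
    | succ n ih =>
        intro l hl
        have := hPdiv _ (ih l hl)
        rwa [div_div, ← pow_succ] at this
  -- P is dense
  have hPdense : Dense P := by
    have hcard : Fintype.card (Fin 2) = Module.finrank ℝ ℂ := by
      simp [Complex.finrank_real_complex]
    let b : Module.Basis (Fin 2) ℝ ℂ := basisOfLinearIndependentOfCardEqFinrank hli hcard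
    have hb : ⇑b = ![ω₁, ω₂] := coe_basisOfLinearIndependentOfCardEqFinrank hli hcard
    let e : ℂ ≃L[ℝ] (Fin 2 → ℝ) := b.equivFun.toContinuousLinearEquiv
    set D : Set ℝ := {x : ℝ | ∃ (m : ℤ) (k : ℕ), x = (m : ℝ) / (p : ℝ) ^ k} with hD
    have hDd : Dense D := dense_ppow p hp
    have hS : Dense (Set.pi Set.univ fun _ : Fin 2 => D) :=
      dense_pi Set.univ fun _ _ => hDd
    have himg : Dense (e.symm '' (Set.pi Set.univ fun _ : Fin 2 => D)) :=
      e.symm.surjective.denseRange.dense_image e.symm.continuous hS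
    refine Dense.mono ?_ himg
    rintro _ ⟨x, hx, rfl⟩
    obtain ⟨m, k, hmk⟩ := hx 0 (Set.mem_univ _)
    obtain ⟨n, j, hnj⟩ := hx 1 (Set.mem_univ _)
    have hx0 : e.symm x = x 0 • ω₁ + x 1 • ω₂ := by
      show b.equivFun.symm x = _
      rw [Module.Basis.equivFun_symm_apply, Fin.sum_univ_two, hb]
      simp
    rw [hx0, hmk, hnj]
    have e1 : ((m : ℝ) / (p : ℝ) ^ k) • ω₁ = ((m : ℂ) * ω₁ + (0:ℤ) * ω₂) / (p : ℂ) ^ k := by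
      push_cast
      rw [Complex.real_smul]
      push_cast
      ring
    have e2 : ((n : ℝ) / (p : ℝ) ^ j) • ω₂ = ((0:ℤ) * ω₁ + (n : ℂ) * ω₂) / (p : ℂ) ^ j := by
      push_cast
      rw [Complex.real_smul]
      push_cast
      ring
    rw [e1, e2]
    exact hPadd _ (hPpow k _ (hΛeq ▸ ⟨m, 0, rfl⟩)) _ (hPpow j _ (hΛeq ▸ ⟨0, n, rfl⟩))
  -- constancy claim from continuity
  have claim1 : ∀ w, ContinuousAt f w → ∀ z, f z = f w := by
    intro w hw z
    obtain ⟨u, hu, hulim⟩ := mem_closure_iff_seq_limit.mp (hPdense (w - z))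
    have h1 : Tendsto (fun n => z + u n) atTop (nhds w) := by
      have h0 : Tendsto (fun n : ℕ => z + u n) atTop (nhds (z + (w - z))) :=
        tendsto_const_nhds.add hulim
      simpa using h0
    have h2 : Tendsto (fun n => f (z + u n)) atTop (nhds (f w)) := hw.tendsto.comp h1
    have h3 : (fun n => f (z + u n)) = fun _ => f z := funext fun n => hu n z
    rw [h3] at h2
    exact tendsto_nhds_unique tendsto_const_nhds h2
  -- analytic points
  set A : Set ℂ := {z | AnalyticAt ℂ f z} with hA
  have hAopen : IsOpen A := by
    rw [isOpen_iff_mem_nhds]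
    intro z hz
    exact hz.eventually_analyticAt
  have hAne : A.Nonempty := by
    have := (hmero 0).eventually_analyticAt
    obtain ⟨y, hy⟩ := this.exists
    exact ⟨y, hy⟩
  obtain ⟨z₀, hz₀⟩ := hAne
  refine ⟨f z₀, fun z => ?_⟩
  have hd : Dense ((z + ·) '' P) := DenseRange.dense_image
    (Function.Surjective.denseRange fun w => ⟨w - z, by ring⟩)
    (continuous_const.add continuous_id) hPdense
  obtain ⟨w, hwA, t, htP, rfl⟩ := hd.inter_open_nonempty A hAopen ⟨z₀, hz₀⟩
  have h1 : f z₀ = f (z + t) := claim1 _ hwA.continuousAt z₀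
  exact (htP z).symm.trans h1.symm
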